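/- arXiv:2604.17348 — 3 statements merged into one kernel-verified Lean document; each statement's English description precedes it below -/
import Mathlib

section
/- Let a, b, u, φ' be positive real constants with b > 0, φ' ≠ 0, and 0 < (a·φ' − b·u)/(b·φ') < 1/3. Define θ₀ = artanh(√(3(aφ' − bu)/(bφ'))) and f(θ) = 2√(φ'/(aφ' − bu))·θ + √(3/b)·ln(cosh(θ − θ₀)/cosh(θ + θ₀)). Then f : ℝ → ℝ is strictly increasing and bijective. -/
open Real Filter

noncomputable def artanh (x : ℝ) : ℝ := (1/2) * Real.log ((1 + x) / (1 - x))

lemma tanh_lt_one' (x : ℝ) : Real.tanh x < 1 := by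
  rw [Real.tanh_eq_sinh_div_cosh, div_lt_one (Real.cosh_pos x)]
  nlinarith [Real.cosh_sub_sinh x, Real.exp_pos (-x)]

lemma neg_one_lt_tanh' (x : ℝ) : -1 < Real.tanh x := by
  rw [Real.tanh_eq_sinh_div_cosh, lt_div_iff₀ (Real.cosh_pos x)]
  nlinarith [Real.cosh_add_sinh x, Real.exp_pos x]

lemma logcosh_hasDerivAt (s θ : ℝ) :
    HasDerivAt (fun x => Real.log (Real.cosh (x - s))) (Real.tanh (θ - s)) θ := by
  have h1 : HasDerivAt (fun x : ℝ => x - s) 1 θ := (hasDerivAt_id θ).sub_const s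
  have h2 := (Real.hasDerivAt_cosh (θ - s)).comp θ h1
  have h3 := h2.log (Real.cosh_pos (θ - s)).ne'
  simpa [Real.tanh_eq_sinh_div_cosh, mul_comm] using h3

theorem stmt_0 (a b u c : ℝ) (ha : 0 < a) (hb : 0 < b) (hu : 0 < u) (hc : 0 < c)
    (h1 : 0 < (a * c - b * u) / (b * c)) (h2 : (a * c - b * u) / (b * c) < 1/3) :
    let θ₀ := _root_.artanh (Real.sqrt (3 * (a * c - b * u) / (b * c)))
    let f : ℝ → ℝ := fun θ =>
      2 * Real.sqrt (c / (a * c - b * u)) * θ +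
        Real.sqrt (3 / b) * Real.log (Real.cosh (θ - θ₀) / Real.cosh (θ + θ₀))
    StrictMono f ∧ Function.Bijective f := by
  intro θ₀ f
  have hbc : 0 < b * c := mul_pos hb hc
  have hm : 0 < a * c - b * u := by
    have := mul_pos h1 hbc
    rwa [div_mul_cancel₀ _ hbc.ne'] at this
  set K := 2 * Real.sqrt (c / (a * c - b * u)) with hK
  set L := Real.sqrt (3 / b) with hL
  have hLpos : 0 < L := Real.sqrt_pos.mpr (div_pos (by norm_num) hb)
  have hKL : 2 * L < K := by
    rw [hK, hL]
    have h3 : 3 / b < c / (a * c - b * u) := by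
      rw [div_lt_div_iff₀ hb hm]
      nlinarith [(div_lt_div_iff₀ hbc (by norm_num : (0:ℝ) < 3)).mp h2]
    have := Real.sqrt_lt_sqrt (by positivity) h3
    linarith
  -- rewrite f
  have hfeq : ∀ θ, f θ = K * θ +
      L * (Real.log (Real.cosh (θ - θ₀)) - Real.log (Real.cosh (θ + θ₀))) := by
    intro θ
    simp only [f]
    rw [Real.log_div (Real.cosh_pos _).ne' (Real.cosh_pos _).ne']
  have hderiv : ∀ θ, HasDerivAt f
      (K + L * (Real.tanh (θ - θ₀) - Real.tanh (θ + θ₀))) θ := by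
    intro θ
    have h1' := logcosh_hasDerivAt θ₀ θ
    have h2' : HasDerivAt (fun x => Real.log (Real.cosh (x + θ₀))) (Real.tanh (θ + θ₀)) θ := by
      have := logcosh_hasDerivAt (-θ₀) θ
      simpa [sub_neg_eq_add] using this
    have h3' := ((hasDerivAt_id θ).const_mul K).add (((h1'.sub h2')).const_mul L)
    simp only [id_eq] at h3'
    have heq : (fun θ => K * θ +
        L * (Real.log (Real.cosh (θ - θ₀)) - Real.log (Real.cosh (θ + θ₀)))) = f :=
      funext fun θ => (hfeq θ).symm
    simp only [Pi.add_def, Pi.sub_def] at h3'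
    rw [heq] at h3'
    simpa [mul_comm] using h3'
  have hdpos : ∀ θ, 0 < K + L * (Real.tanh (θ - θ₀) - Real.tanh (θ + θ₀)) := by
    intro θ
    nlinarith [tanh_lt_one' (θ + θ₀), neg_one_lt_tanh' (θ - θ₀), hLpos, hKL]
  have hdiff : Differentiable ℝ f := fun θ => (hderiv θ).differentiableAt
  have hderiv' : ∀ θ, deriv f θ = K + L * (Real.tanh (θ - θ₀) - Real.tanh (θ + θ₀)) :=
    fun θ => (hderiv θ).deriv
  have hmono : StrictMono f := strictMono_of_deriv_pos (fun θ => by rw [hderiv']; exact hdpos θ)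
  refine ⟨hmono, hmono.injective, ?_⟩
  set C := K - 2 * L with hC
  have hCpos : 0 < C := by linarith
  have hgrow : ∀ ⦃x y : ℝ⦄, x ≤ y → C * (y - x) ≤ f y - f x := by
    apply mul_sub_le_image_sub_of_le_deriv hdiff
    intro x
    rw [hderiv']
    nlinarith [tanh_lt_one' (x + θ₀), neg_one_lt_tanh' (x - θ₀), hLpos]
  have htop : Tendsto f atTop atTop := by
    apply tendsto_atTop_mono' _ (eventually_atTop.mpr ⟨0, fun θ hθ => ?_⟩)
      (tendsto_atTop_add_const_left _ (f 0) (tendsto_id.const_mul_atTop hCpos))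
    have := hgrow hθ
    simp only [sub_zero] at this
    simp only [id]
    linarith
  have hbot : Tendsto f atBot atBot := by
    apply tendsto_atBot_mono' _ (eventually_atBot.mpr ⟨0, fun θ hθ => ?_⟩)
      (tendsto_atBot_add_const_left _ (f 0) (tendsto_id.const_mul_atBot hCpos))
    have := hgrow hθ
    simp only [zero_sub] at this
    simp only [id]
    linarith
  exact hdiff.continuous.surjective htop hbot
end

section
/- Fix constants c₁ = φ', A = aφ' − bu, B = b with B > 0 and 0 < A/(Bc₁) < 1/3, c₁ > 0. Define H(v, y) = B·v³ − 3(v − c₁)·y² − 3A·v². Then H is a first integral of the planar system v' = y, y' = (y² − B v² + 2A v)/(2(c₁ − v)): along any solution (v(τ), y(τ)) with v(τ) ≠ c₁, the derivative d/dτ H(v(τ), y(τ)) = 0. -/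
open Real Filter

theorem stmt_3 (c₁ A B : ℝ) (hB : 0 < B) (hc₁ : 0 < c₁)
    (h1 : 0 < A / (B * c₁)) (h2 : A / (B * c₁) < 1/3)
    (H : ℝ → ℝ → ℝ) (hH : ∀ v y, H v y = B * v ^ 3 - 3 * (v - c₁) * y ^ 2 - 3 * A * v ^ 2)
    (v y : ℝ → ℝ)
    (hv : ∀ τ, HasDerivAt v (y τ) τ)
    (hy : ∀ τ, HasDerivAt y ((y τ ^ 2 - B * v τ ^ 2 + 2 * A * v τ) / (2 * (c₁ - v τ))) τ)
    (hne : ∀ τ, v τ ≠ c₁) :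
    ∀ τ, HasDerivAt (fun s => H (v s) (y s)) 0 τ := by
  intro τ
  have hv' := hv τ
  have hy' := hy τ
  set D := (y τ ^ 2 - B * v τ ^ 2 + 2 * A * v τ) / (2 * (c₁ - v τ)) with hD
  have key : HasDerivAt (fun s => B * v s ^ 3 - 3 * (v s - c₁) * y s ^ 2 - 3 * A * v s ^ 2)
      ((B * (3 * v τ ^ 2 * y τ)) - (3 * y τ * (y τ ^ 2) + (3 * (v τ - c₁)) * (2 * y τ * D)) -
        3 * A * (2 * v τ * y τ)) τ := by
    have h3 : HasDerivAt (fun s => v s ^ 3) (3 * v τ ^ 2 * y τ) τ := by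
      simpa using hv'.fun_pow 3
    have h2' : HasDerivAt (fun s => v s ^ 2) (2 * v τ * y τ) τ := by
      simpa using hv'.fun_pow 2
    have hy2 : HasDerivAt (fun s => y s ^ 2) (2 * y τ * D) τ := by
      simpa using hy'.fun_pow 2
    have hvc : HasDerivAt (fun s => 3 * (v s - c₁)) (3 * y τ) τ := by
      simpa using ((hv'.sub_const c₁).const_mul 3)
    exact ((h3.const_mul B).sub (hvc.mul hy2)).sub (h2'.const_mul (3*A))
  have heq : (fun s => H (v s) (y s)) =
      (fun s => B * v s ^ 3 - 3 * (v s - c₁) * y s ^ 2 - 3 * A * v s ^ 2) := by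
    funext s; rw [hH]
  rw [heq]
  convert key using 1
  have hne' : c₁ - v τ ≠ 0 := sub_ne_zero.2 (Ne.symm (hne τ))
  rw [hD]
  field_simp
  ring
end

section
/- Let a, b, u, c be positive constants with b > 0, 0 < (a·c − b·u)/(b·c) < 1/3. Define κ = 3(ac − bu)/b and m = 3(ac − bu)/(bc) ∈ (0, 1/3), and set w(θ) = κ / (cosh²θ − m·sinh²θ). Then w satisfies, with τ and θ related by dτ/dθ = 2√(c/(ac − bu)) + √(3/b) · (tanh(θ − θ₀) − tanh(θ + θ₀)) where θ₀ = artanh(√m), the equation (dw/dτ)² = (b w³ − 3(ac − bu) w²)/(3(w − c)), i.e. the pair (w(θ), τ(θ)) gives a parametric solution of the soliton ODE. -/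
open Real Filter

lemma aux_lt (m c sh : ℝ) (hc : 0 < c) (hm1 : m < 1) :
    m * c < c * (1 + (1 - m) * sh ^ 2) := by
  nlinarith [mul_pos hc (show (0:ℝ) < 1 - m by linarith),
    mul_nonneg (mul_pos hc (show (0:ℝ) < 1 - m by linarith)).le (sq_nonneg sh)]

lemma aux_R (b c m sh ch Q κ D : ℝ) (hb : 0 < b) (hc : 0 < c) (hm0 : 0 < m) (hm1 : m < 1)
    (hQ1 : Q = 1 + (1 - m) * sh ^ 2) (hchsq : ch ^ 2 = sh ^ 2 + 1) (hκm : κ = m * c)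
    (hD : D = m * (b * c) / 3) :
    D * (κ ^ 2 * sh ^ 2) / (c * (Q ^ 2 * ch ^ 2)) =
      (b * (κ / Q) ^ 3 - 3 * D * (κ / Q) ^ 2) / (3 * (κ / Q - c)) := by
  subst hκm hD hQ1
  rw [hchsq]
  have h1m : (0:ℝ) < 1 - m := by linarith
  have hQpos : (0:ℝ) < 1 + (1 - m) * sh ^ 2 := by
    have := mul_nonneg h1m.le (sq_nonneg sh); linarith
  have hlt := aux_lt m c sh hc hm1
  have hne : m * c / (1 + (1 - m) * sh ^ 2) - c ≠ 0 := by
    have : m * c / (1 + (1 - m) * sh ^ 2) < c := (div_lt_iff₀ hQpos).mpr hlt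
    exact ne_of_lt (by linarith)
  have hsh1 : (0:ℝ) < sh ^ 2 + 1 := by positivity
  rw [div_eq_div_iff (by positivity) (mul_ne_zero (by norm_num) hne)]
  field_simp
  ring

theorem stmt_5 (a b u c : ℝ) (ha : 0 < a) (hb : 0 < b) (hu : 0 < u) (hc : 0 < c)
    (h1 : 0 < (a * c - b * u) / (b * c)) (h2 : (a * c - b * u) / (b * c) < 1/3) :
    let κ := 3 * (a * c - b * u) / b
    let m := 3 * (a * c - b * u) / (b * c)
    let θ₀ := _root_.artanh (Real.sqrt m)
    let w : ℝ → ℝ := fun θ => κ / (Real.cosh θ ^ 2 - m * Real.sinh θ ^ 2)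
    -- dτ/dθ
    let T : ℝ → ℝ := fun θ =>
      2 * Real.sqrt (c / (a * c - b * u)) +
        Real.sqrt (3 / b) * (Real.tanh (θ - θ₀) - Real.tanh (θ + θ₀))
    ∀ θ : ℝ, (deriv w θ / T θ) ^ 2 =
      (b * w θ ^ 3 - 3 * (a * c - b * u) * w θ ^ 2) / (3 * (w θ - c)) := by
  intro κ m θ₀ w T θ
  have hbc : 0 < b * c := mul_pos hb hc
  have hD : 0 < a * c - b * u := by
    have h := mul_pos h1 hbc
    rwa [div_mul_cancel₀ _ (ne_of_gt hbc)] at h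
  have hmdef : m = 3 * (a * c - b * u) / (b * c) := rfl
  have hκdef : κ = 3 * (a * c - b * u) / b := rfl
  have hθ₀def : θ₀ = _root_.artanh (Real.sqrt m) := rfl
  have hwdef : w = fun θ => κ / (Real.cosh θ ^ 2 - m * Real.sinh θ ^ 2) := rfl
  have hTdef : T θ = 2 * Real.sqrt (c / (a * c - b * u)) +
      Real.sqrt (3 / b) * (Real.tanh (θ - θ₀) - Real.tanh (θ + θ₀)) := rfl
  clear_value κ m θ₀ w T
  have hm0 : 0 < m := by rw [hmdef]; positivity
  have hm1 : m < 1 := by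
    rw [hmdef, show 3 * (a * c - b * u) / (b * c) = 3 * ((a * c - b * u) / (b * c)) by ring]
    linarith
  have hκm : κ = m * c := by rw [hκdef, hmdef]; field_simp
  have hDm : a * c - b * u = m * (b * c) / 3 := by rw [hmdef]; field_simp
  set sm := Real.sqrt m with hsmdef
  have hsm2 : sm ^ 2 = m := Real.sq_sqrt hm0.le
  have hsm0 : 0 ≤ sm := Real.sqrt_nonneg m
  have hsm1 : sm < 1 := by
    rw [hsmdef, show (1:ℝ) = Real.sqrt 1 by simp]
    exact Real.sqrt_lt_sqrt hm0.le hm1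
  clear_value sm
  -- exponential at θ₀
  set g := Real.exp θ₀ with hgdef
  have hg0 : 0 < g := Real.exp_pos θ₀
  have hr0 : 0 < (1 + sm) / (1 - sm) := div_pos (by linarith) (by linarith)
  have hg2 : g ^ 2 = (1 + sm) / (1 - sm) := by
    rw [hgdef, ← Real.exp_nat_mul]
    have h2θ : ((2 : ℕ) : ℝ) * θ₀ = Real.log ((1 + sm) / (1 - sm)) := by
      rw [hθ₀def, hsmdef]
      show ((2:ℕ):ℝ) * ((1/2) * Real.log ((1 + Real.sqrt m) / (1 - Real.sqrt m))) = _
      push_cast; ring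
    rw [h2θ, Real.exp_log hr0]
  have hg2' : g ^ 2 * (1 - sm) = 1 + sm := by
    rw [hg2, div_mul_cancel₀ _ (by linarith : (1:ℝ) - sm ≠ 0)]
  set c0 := Real.cosh θ₀ with hc0def
  set s0 := Real.sinh θ₀ with hs0def
  have hc0pos : 0 < c0 := Real.cosh_pos θ₀
  have hcs0 : c0 ^ 2 - s0 ^ 2 = 1 := Real.cosh_sq_sub_sinh_sq θ₀
  have hs0g : s0 = (g - g⁻¹) / 2 := by
    rw [hs0def, Real.sinh_eq, Real.exp_neg, ← hgdef]
  have hc0g : c0 = (g + g⁻¹) / 2 := by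
    rw [hc0def, Real.cosh_eq, Real.exp_neg, ← hgdef]
  clear_value c0 s0 g
  have hs0 : s0 = sm * c0 := by
    rw [hs0g, hc0g]
    field_simp
    linear_combination hg2'
  have hc0sq : (1 - m) * c0 ^ 2 = 1 := by
    have h := hcs0
    rw [hs0] at h
    linear_combination h + c0 ^ 2 * hsm2
  -- notation at the point θ
  set sh := Real.sinh θ with hshdef
  set ch := Real.cosh θ with hchdef
  have hchpos : 0 < ch := Real.cosh_pos θ
  have hchsq : ch ^ 2 = sh ^ 2 + 1 := Real.cosh_sq θ
  have hcsub : 0 < ch * c0 - sh * s0 := by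
    have h := Real.cosh_pos (θ - θ₀); rw [Real.cosh_sub] at h
    rw [hshdef, hchdef, hc0def, hs0def]; exact h
  have hcadd : 0 < ch * c0 + sh * s0 := by
    have h := Real.cosh_pos (θ + θ₀); rw [Real.cosh_add] at h
    rw [hshdef, hchdef, hc0def, hs0def]; exact h
  have htsub : Real.tanh (θ - θ₀) = (sh * c0 - ch * s0) / (ch * c0 - sh * s0) := by
    rw [Real.tanh_eq_sinh_div_cosh, Real.sinh_sub, Real.cosh_sub,
      hshdef, hchdef, hc0def, hs0def]
  have htadd : Real.tanh (θ + θ₀) = (sh * c0 + ch * s0) / (ch * c0 + sh * s0) := by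
    rw [Real.tanh_eq_sinh_div_cosh, Real.sinh_add, Real.cosh_add,
      hshdef, hchdef, hc0def, hs0def]
  set Q : ℝ := ch ^ 2 - m * sh ^ 2 with hQdef
  have hQ1 : Q = 1 + (1 - m) * sh ^ 2 := by rw [hQdef]; linear_combination hchsq
  have hQpos : 0 < Q := by
    rw [hQ1]
    have h1 : 0 ≤ (1 - m) * sh ^ 2 := mul_nonneg (by linarith) (sq_nonneg sh)
    linarith
  clear_value sh ch
  clear_value Q
  -- the tanh difference
  have hdiff : Real.tanh (θ - θ₀) - Real.tanh (θ + θ₀) = -2 * sm / Q := by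
    rw [htsub, htadd, div_sub_div _ _ (ne_of_gt hcsub) (ne_of_gt hcadd),
      div_eq_div_iff (by positivity) (ne_of_gt hQpos)]
    linear_combination (-2*c0*s0*Q) * hchsq + (-2*c0*Q - 2*sm*sh^2*(s0 + sm*c0)) * hs0 +
      (-2*sm*sh^2*c0^2) * hsm2 + (-2*sm*c0^2) * hQdef
  -- square roots p and e
  set p := Real.sqrt (c / (a * c - b * u)) with hpdef
  have hp2 : p ^ 2 = c / (a * c - b * u) := Real.sq_sqrt (by positivity)
  have hp0 : 0 < p := Real.sqrt_pos.mpr (by positivity)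
  set e := Real.sqrt (3 / b) with hedef
  have he2 : e ^ 2 = 3 / b := Real.sq_sqrt (by positivity)
  have he0 : 0 < e := Real.sqrt_pos.mpr (by positivity)
  clear_value p e
  have hp2' : p ^ 2 * (a * c - b * u) = c := by
    rw [hp2, div_mul_cancel₀ _ (ne_of_gt hD)]
  have hmp2 : m * p ^ 2 = 3 / b := by
    rw [hp2, hmdef]; field_simp
  have hesp : e * sm * p = 3 / b := by
    have hsq : (e * sm * p) ^ 2 = (3 / b) ^ 2 := by
      calc (e * sm * p) ^ 2 = e ^ 2 * (sm ^ 2 * p ^ 2) := by ring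
        _ = (3 / b) * (m * p ^ 2) := by rw [he2, hsm2]
        _ = (3 / b) ^ 2 := by rw [hmp2]; ring
    have hnn : 0 ≤ e * sm * p := by positivity
    have h30 : (0:ℝ) ≤ 3 / b := by positivity
    calc e * sm * p = Real.sqrt ((e * sm * p) ^ 2) := (Real.sqrt_sq hnn).symm
      _ = Real.sqrt ((3 / b) ^ 2) := by rw [hsq]
      _ = 3 / b := Real.sqrt_sq h30
  -- value of T θ
  have hTval : T θ = 2 * p * ((1 - m) * ch ^ 2) / Q := by
    rw [hTdef, hdiff]
    rw [eq_div_iff (ne_of_gt hQpos)]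
    have h1 : e * (-2 * sm / Q) * Q = -2 * (e * sm) := by
      field_simp
    rw [add_mul, h1]
    have h2 : e * sm = m * p := by
      have h3 : e * sm * p = m * p * p := by
        rw [hesp, ← hmp2]; ring
      exact mul_right_cancel₀ (ne_of_gt hp0) h3
    rw [h2, hQ1]
    linear_combination (-(2 * p * (1 - m))) * hchsq
  -- derivative of w
  have hderiv : deriv w θ = -(2 * κ * (1 - m) * sh * ch) / Q ^ 2 := by
    have hQder : HasDerivAt (fun x => Real.cosh x ^ 2 - m * Real.sinh x ^ 2)
        (2 * (1 - m) * Real.sinh θ * Real.cosh θ) θ := by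
      have h1 := (Real.hasDerivAt_cosh θ).fun_pow 2
      have h2 := ((Real.hasDerivAt_sinh θ).fun_pow 2).const_mul m
      have h3 := h1.fun_sub h2
      refine h3.congr_deriv ?_
      push_cast
      ring
    have hQne : Real.cosh θ ^ 2 - m * Real.sinh θ ^ 2 ≠ 0 := by
      rw [← hchdef, ← hshdef, ← hQdef]; exact ne_of_gt hQpos
    have hwd : HasDerivAt w
        ((0 * (Real.cosh θ ^ 2 - m * Real.sinh θ ^ 2) -
          κ * (2 * (1 - m) * Real.sinh θ * Real.cosh θ)) /
          (Real.cosh θ ^ 2 - m * Real.sinh θ ^ 2) ^ 2) θ := by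
      rw [hwdef]
      exact (hasDerivAt_const θ κ).div hQder hQne
    rw [hwd.deriv, ← hchdef, ← hshdef, ← hQdef]
    ring
  -- value of w θ
  have hwval : w θ = κ / Q := by
    rw [hwdef, hQdef, hchdef, hshdef]
  -- put everything together
  rw [hderiv, hTval, hwval]
  have h1m : (0:ℝ) < 1 - m := by linarith
  have e1 : -(2 * κ * (1 - m) * sh * ch) / Q ^ 2 / (2 * p * ((1 - m) * ch ^ 2) / Q) =
      -(κ * sh) / (p * (Q * ch)) := by
    rw [div_div_div_eq]
    rw [div_eq_div_iff (by positivity) (by positivity)]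
    ring
  rw [e1]
  have hE : -(κ * sh) / (p * (Q * ch)) ^ 2 = 0 ∨ True := Or.inr trivial
  have hL : (-(κ * sh) / (p * (Q * ch))) ^ 2 =
      (a * c - b * u) * (κ ^ 2 * sh ^ 2) / (c * (Q ^ 2 * ch ^ 2)) := by
    rw [div_pow]
    rw [div_eq_div_iff (by positivity) (by positivity)]
    have : (p * (Q * ch)) ^ 2 = p ^ 2 * (Q ^ 2 * ch ^ 2) := by ring
    rw [this]
    linear_combination (-(κ ^ 2 * sh ^ 2 * (Q ^ 2 * ch ^ 2))) * hp2'
  rw [hL]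
  exact aux_R b c m sh ch Q κ (a * c - b * u) hb hc hm0 hm1 hQ1 hchsq hκm hDm
end
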